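/- Let G be a graph on n vertices and let ℓ, h be integers with 1 ≤ ℓ ≤ h, and δ a real with 0 ≤ δ ≤ 1. Then either (1) G has a spanning subgraph G' in which every vertex has degree at most h and fewer than δn vertices have degree less than ℓ, or (2) V(G) admits a partition into L, H, R with |L| ≥ δn, every vertex of L having strictly fewer than ℓ neighbors (in G) outside H, and |H| ≤ (2ℓ/h)·n. -/

import Mathlib

open Finset SimpleGraph
open scoped Classical

section helpers

variable {V : Type*} [Fintype V]

/-- instance-free degree -/
noncomputable def ddeg (G' : SimpleGraph V) (v : V) : ℕ := (G'.neighborSet v).ncard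

lemma edge_le_of_adj {G : SimpleGraph V} {u v : V} (h : G.Adj u v) :
    SimpleGraph.edge u v ≤ G := by
  intro x y hxy
  rw [SimpleGraph.edge_adj] at hxy
  rcases hxy with ⟨hxy | hxy, -⟩
  · exact hxy.1 ▸ hxy.2 ▸ h
  · exact hxy.1 ▸ hxy.2 ▸ h.symm

lemma ddeg_bot (v : V) : ddeg (⊥ : SimpleGraph V) v = 0 := by
  have : (⊥ : SimpleGraph V).neighborSet v = ∅ := by
    ext y; simp
  rw [ddeg, this, Set.ncard_empty]

lemma nbr_sup_edge_fst (G' : SimpleGraph V) {u v : V} (hne : u ≠ v) :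
    (G' ⊔ SimpleGraph.edge u v).neighborSet u = insert v (G'.neighborSet u) := by
  ext y
  simp only [SimpleGraph.mem_neighborSet, SimpleGraph.sup_adj,
    SimpleGraph.edge_adj, Set.mem_insert_iff]
  aesop

lemma nbr_sup_edge_snd (G' : SimpleGraph V) {u v : V} (hne : u ≠ v) :
    (G' ⊔ SimpleGraph.edge u v).neighborSet v = insert u (G'.neighborSet v) := by
  ext y
  simp only [SimpleGraph.mem_neighborSet, SimpleGraph.sup_adj,
    SimpleGraph.edge_adj, Set.mem_insert_iff]
  aesop

lemma nbr_sup_edge_other (G' : SimpleGraph V) {u v x : V} (hxu : x ≠ u) (hxv : x ≠ v) :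
    (G' ⊔ SimpleGraph.edge u v).neighborSet x = G'.neighborSet x := by
  ext y
  simp only [SimpleGraph.mem_neighborSet, SimpleGraph.sup_adj, SimpleGraph.edge_adj]
  aesop

lemma ddeg_sup_edge_fst (G' : SimpleGraph V) {u v : V} (hne : u ≠ v) (hna : ¬ G'.Adj u v) :
    ddeg (G' ⊔ SimpleGraph.edge u v) u = ddeg G' u + 1 := by
  rw [ddeg, ddeg, nbr_sup_edge_fst G' hne, Set.ncard_insert_of_notMem]
  exact hna

lemma ddeg_sup_edge_snd (G' : SimpleGraph V) {u v : V} (hne : u ≠ v) (hna : ¬ G'.Adj u v) :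
    ddeg (G' ⊔ SimpleGraph.edge u v) v = ddeg G' v + 1 := by
  rw [ddeg, ddeg, nbr_sup_edge_snd G' hne, Set.ncard_insert_of_notMem]
  exact fun hadj => hna hadj.symm

lemma ddeg_sup_edge_other (G' : SimpleGraph V) {u v x : V} (hxu : x ≠ u) (hxv : x ≠ v) :
    ddeg (G' ⊔ SimpleGraph.edge u v) x = ddeg G' x := by
  rw [ddeg, ddeg, nbr_sup_edge_other G' hxu hxv]

lemma nbr_sdiff_edge_fst (G' : SimpleGraph V) (u v : V) :
    (G' \ SimpleGraph.edge u v).neighborSet u = (G'.neighborSet u) \ {v} := by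
  ext y
  rw [Set.mem_diff, Set.mem_singleton_iff, SimpleGraph.mem_neighborSet,
    SimpleGraph.mem_neighborSet, SimpleGraph.sdiff_adj, SimpleGraph.edge_adj]
  constructor
  · rintro ⟨hy, hny⟩
    exact ⟨hy, fun hyv => hny ⟨Or.inl ⟨rfl, hyv⟩, hy.ne⟩⟩
  · rintro ⟨hy, hyv⟩
    refine ⟨hy, ?_⟩
    rintro ⟨hc | hc, hne'⟩
    · exact hyv hc.2
    · exact hne' hc.2.symm

lemma nbr_sdiff_edge_snd (G' : SimpleGraph V) (u v : V) :
    (G' \ SimpleGraph.edge u v).neighborSet v = (G'.neighborSet v) \ {u} := by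
  ext y
  rw [Set.mem_diff, Set.mem_singleton_iff, SimpleGraph.mem_neighborSet,
    SimpleGraph.mem_neighborSet, SimpleGraph.sdiff_adj, SimpleGraph.edge_adj]
  constructor
  · rintro ⟨hy, hny⟩
    exact ⟨hy, fun hyu => hny ⟨Or.inr ⟨rfl, hyu⟩, hy.ne⟩⟩
  · rintro ⟨hy, hyu⟩
    refine ⟨hy, ?_⟩
    rintro ⟨hc | hc, hne'⟩
    · exact hne' hc.2.symm
    · exact hyu hc.2

lemma nbr_sdiff_edge_other (G' : SimpleGraph V) {u v x : V} (hxu : x ≠ u) (hxv : x ≠ v) :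
    (G' \ SimpleGraph.edge u v).neighborSet x = G'.neighborSet x := by
  ext y
  simp only [SimpleGraph.mem_neighborSet, SimpleGraph.sdiff_adj, SimpleGraph.edge_adj]
  aesop

lemma ddeg_sdiff_edge_fst (G' : SimpleGraph V) {u v : V} (hadj : G'.Adj u v) :
    ddeg (G' \ SimpleGraph.edge u v) u + 1 = ddeg G' u := by
  rw [ddeg, ddeg, nbr_sdiff_edge_fst G' u v]
  exact Set.ncard_diff_singleton_add_one hadj

lemma ddeg_sdiff_edge_snd (G' : SimpleGraph V) {u v : V} (hadj : G'.Adj u v) :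
    ddeg (G' \ SimpleGraph.edge u v) v + 1 = ddeg G' v := by
  rw [ddeg, ddeg, nbr_sdiff_edge_snd G' u v]
  exact Set.ncard_diff_singleton_add_one hadj.symm

lemma ddeg_eq_card (G' : SimpleGraph V) (v : V) :
    ddeg G' v = (G'.neighborFinset v).card := by
  rw [ddeg, SimpleGraph.neighborFinset_def, Set.ncard_eq_toFinset_card']

/-- Counting lemma: if every edge has an endpoint of degree ≤ ℓ, then the sum of degrees
over high-degree vertices is at most the sum over low-degree vertices. -/
lemma sum_ddeg_high_le_low (G' : SimpleGraph V) (ℓ : ℕ)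
    (hedge : ∀ u v, G'.Adj u v → ddeg G' u ≤ ℓ ∨ ddeg G' v ≤ ℓ) :
    ∑ v ∈ Finset.univ.filter (fun v => ¬ ddeg G' v ≤ ℓ), ddeg G' v
      ≤ ∑ v ∈ Finset.univ.filter (fun v => ddeg G' v ≤ ℓ), ddeg G' v := by
  have h1 : ∀ s : Finset V, ∑ v ∈ s, ddeg G' v
      = (s.sigma fun v => G'.neighborFinset v).card := by
    intro s
    rw [Finset.card_sigma]
    exact Finset.sum_congr rfl fun v _ => ddeg_eq_card G' v
  rw [h1, h1]
  apply Finset.card_le_card_of_injOn (fun p => ⟨p.2, p.1⟩)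
  · rintro ⟨a, b⟩ hp
    simp only [Finset.mem_coe, Finset.mem_sigma, Finset.mem_filter, Finset.mem_univ, true_and,
      SimpleGraph.mem_neighborFinset] at hp ⊢
    obtain ⟨ha, hb⟩ := hp
    exact ⟨(hedge a b hb).resolve_left ha, hb.symm⟩
  · rintro ⟨a, b⟩ - ⟨c, d⟩ - hEq
    obtain ⟨h1, h2⟩ := Sigma.mk.inj_iff.mp hEq
    obtain rfl : b = d := h1
    obtain rfl : a = c := eq_of_heq h2
    rfl

end helpers

/-- Either G has a spanning subgraph G' of maximum degree at most h in which fewer than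
δn vertices have degree less than ℓ, or V(G) can be partitioned into L, H, R with
|L| ≥ δn, every vertex of L having fewer than ℓ neighbors outside H, and |H| ≤ (2ℓ/h)n. -/
theorem spanning_subgraph_or_partition {V : Type*} [Fintype V] (G : SimpleGraph V)
    (ℓ h : ℕ) (hℓ : 1 ≤ ℓ) (hh : ℓ ≤ h) (δ : ℝ) (hδ0 : 0 ≤ δ) (hδ1 : δ ≤ 1) :
    (∃ G' : SimpleGraph V, G' ≤ G ∧
      (∀ v, (G'.neighborSet v).ncard ≤ h) ∧
      ({v : V | (G'.neighborSet v).ncard < ℓ}.ncard : ℝ) < δ * (Fintype.card V : ℝ)) ∨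
    (∃ L H R : Set V, L ∪ H ∪ R = Set.univ ∧
      Disjoint L H ∧ Disjoint L R ∧ Disjoint H R ∧
      δ * (Fintype.card V : ℝ) ≤ (L.ncard : ℝ) ∧
      (∀ v ∈ L, ((G.neighborSet v) \ H).ncard < ℓ) ∧
      (H.ncard : ℝ) ≤ 2 * (ℓ : ℝ) / (h : ℝ) * (Fintype.card V : ℝ)) := by
  classical
  set n := Fintype.card V with hn
  have hh1 : 1 ≤ h := le_trans hℓ hh
  -- the family of admissible subgraphs
  set T : Finset (SimpleGraph V) :=
    Finset.univ.filter (fun G' => G' ≤ G ∧ ∀ v, ddeg G' v ≤ h) with hT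
  have memT : ∀ G' : SimpleGraph V, G' ∈ T ↔ (G' ≤ G ∧ ∀ v, ddeg G' v ≤ h) := by
    intro G'; simp [hT]
  have hTne : T.Nonempty := by
    refine ⟨⊥, (memT ⊥).2 ⟨bot_le, fun v => ?_⟩⟩
    rw [ddeg_bot]; exact Nat.zero_le h
  set C : ℕ := h * n + 3 with hC
  set Φ : SimpleGraph V → ℕ := fun G' => ∑ v, min (ddeg G' v) ℓ with hΦ
  set E : SimpleGraph V → ℕ := fun G' => ∑ v, ddeg G' v with hEdef
  set Ψ : SimpleGraph V → ℕ := fun G' => Φ G' * C + (C - E G') with hΨ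
  have hEle : ∀ G' : SimpleGraph V, (∀ v, ddeg G' v ≤ h) → E G' ≤ h * n := by
    intro G' hdeg
    calc E G' ≤ ∑ _v : V, h := Finset.sum_le_sum (fun v _ => hdeg v)
    _ = n * h := by rw [Finset.sum_const, Finset.card_univ, smul_eq_mul]
    _ = h * n := Nat.mul_comm n h
  obtain ⟨G₀, hG₀T, hmax⟩ := T.exists_max_image Ψ hTne
  obtain ⟨hG₀le, hG₀deg⟩ := (memT G₀).1 hG₀T
  -- Claim 1: addable edges don't exist
  have claim_add : ∀ u v : V, G.Adj v u → ddeg G₀ u < h → ddeg G₀ v < ℓ →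
      G₀.Adj v u := by
    intro u v hadj hu hv
    by_contra hna
    have hne : v ≠ u := hadj.ne
    set G₁ : SimpleGraph V := G₀ ⊔ SimpleGraph.edge v u with hG₁
    have hdeg1 : ∀ x, ddeg G₁ x ≤ h := by
      intro x
      by_cases hxv : x = v
      · subst hxv
        rw [hG₁, ddeg_sup_edge_fst G₀ hne hna]
        omega
      · by_cases hxu : x = u
        · subst hxu
          rw [hG₁, ddeg_sup_edge_snd G₀ hne hna]
          omega
        · rw [hG₁, ddeg_sup_edge_other G₀ hxv hxu]
          exact hG₀deg x
    have hG₁T : G₁ ∈ T := (memT G₁).2 ⟨sup_le hG₀le (edge_le_of_adj hadj), hdeg1⟩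
    have hΦlt : Φ G₀ < Φ G₁ := by
      apply Finset.sum_lt_sum
      · intro i _
        apply min_le_min _ le_rfl
        by_cases hiv : i = v
        · subst hiv; rw [hG₁, ddeg_sup_edge_fst G₀ hne hna]; omega
        · by_cases hiu : i = u
          · subst hiu; rw [hG₁, ddeg_sup_edge_snd G₀ hne hna]; omega
          · rw [hG₁, ddeg_sup_edge_other G₀ hiv hiu]
      · refine ⟨v, Finset.mem_univ v, ?_⟩
        rw [hG₁, ddeg_sup_edge_fst G₀ hne hna]
        rw [min_eq_left (by omega), min_eq_left (by omega)]
        omega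
    have hE1 : E G₁ ≤ h * n := hEle G₁ hdeg1
    have hE0 : E G₀ ≤ h * n := hEle G₀ hG₀deg
    have hle : Ψ G₁ ≤ Ψ G₀ := hmax G₁ hG₁T
    have hΨ1 : Ψ G₁ = Φ G₁ * C + (C - E G₁) := rfl
    have hΨ0 : Ψ G₀ = Φ G₀ * C + (C - E G₀) := rfl
    have hΦC : Φ G₀ * C + C ≤ Φ G₁ * C := by
      calc Φ G₀ * C + C = (Φ G₀ + 1) * C := by ring
      _ ≤ Φ G₁ * C := Nat.mul_le_mul_right C hΦlt
    omega
  -- Claim 2: every edge of G₀ has an endpoint of degree ≤ ℓ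
  have claim_del : ∀ u v : V, G₀.Adj u v → ddeg G₀ u ≤ ℓ ∨ ddeg G₀ v ≤ ℓ := by
    intro u v hadj
    by_contra hcon
    push_neg at hcon
    obtain ⟨hu, hv⟩ := hcon
    set G₂ : SimpleGraph V := G₀ \ SimpleGraph.edge u v with hG₂
    have hdu : ddeg G₂ u + 1 = ddeg G₀ u := by
      rw [hG₂]; exact ddeg_sdiff_edge_fst G₀ hadj
    have hdv : ddeg G₂ v + 1 = ddeg G₀ v := by
      rw [hG₂]; exact ddeg_sdiff_edge_snd G₀ hadj
    have hdeg2 : ∀ x, ddeg G₂ x ≤ h := by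
      intro x
      by_cases hxu : x = u
      · subst hxu; have := hG₀deg x; omega
      · by_cases hxv : x = v
        · subst hxv; have := hG₀deg x; omega
        · rw [hG₂, ddeg, nbr_sdiff_edge_other G₀ hxu hxv]
          exact hG₀deg x
    have hG₂T : G₂ ∈ T := (memT G₂).2 ⟨le_trans sdiff_le hG₀le, hdeg2⟩
    have hΦeq : Φ G₂ = Φ G₀ := by
      apply Finset.sum_congr rfl
      intro i _
      by_cases hiu : i = u
      · subst hiu
        rw [min_eq_right (by omega), min_eq_right (by omega)]
      · by_cases hiv : i = v
        · subst hiv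
          rw [min_eq_right (by omega), min_eq_right (by omega)]
        · rw [hG₂, ddeg, nbr_sdiff_edge_other G₀ hiu hiv]; rfl
    have hElt : E G₂ < E G₀ := by
      apply Finset.sum_lt_sum
      · intro i _
        by_cases hiu : i = u
        · subst hiu; omega
        · by_cases hiv : i = v
          · subst hiv; omega
          · rw [hG₂, ddeg, nbr_sdiff_edge_other G₀ hiu hiv]; exact le_rfl
      · exact ⟨u, Finset.mem_univ u, by omega⟩
    have hE0 : E G₀ ≤ h * n := hEle G₀ hG₀deg
    have hle : Ψ G₂ ≤ Ψ G₀ := hmax G₂ hG₂T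
    have hΨ2 : Ψ G₂ = Φ G₂ * C + (C - E G₂) := rfl
    have hΨ0 : Ψ G₀ = Φ G₀ * C + (C - E G₀) := rfl
    rw [hΦeq] at hΨ2
    omega
  -- the bad set
  set B : Finset V := Finset.univ.filter (fun v => ddeg G₀ v < ℓ) with hB
  by_cases hBcase : (B.card : ℝ) < δ * n
  · -- option 1
    left
    refine ⟨G₀, hG₀le, fun v => hG₀deg v, ?_⟩
    have hset : {v : V | (G₀.neighborSet v).ncard < ℓ} = ↑B := by
      ext v
      show _ ↔ v ∈ (B : Set V)
      rw [Finset.mem_coe, hB, Finset.mem_filter]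
      simp [ddeg]
    rw [hset, Set.ncard_coe_finset]
    exact hBcase
  · -- option 2
    right
    push_neg at hBcase
    set L : Set V := {v : V | ddeg G₀ v < ℓ} with hL
    set Hs : Set V := {v : V | ddeg G₀ v = h} with hHs
    refine ⟨L, Hs, (L ∪ Hs)ᶜ, Set.union_compl_self _, ?_, ?_, ?_, ?_, ?_, ?_⟩
    · rw [Set.disjoint_left]
      intro v hvL hvH
      rw [hL, Set.mem_setOf_eq] at hvL
      rw [hHs, Set.mem_setOf_eq] at hvH
      omega
    · exact Disjoint.mono_left Set.subset_union_left disjoint_compl_right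
    · exact Disjoint.mono_left Set.subset_union_right disjoint_compl_right
    · have hLB : L = ↑B := by ext v; simp [hL, hB]
      rw [hLB, Set.ncard_coe_finset]
      exact hBcase
    · -- neighbor condition
      intro v hvL
      rw [hL, Set.mem_setOf_eq] at hvL
      have hsub : (G.neighborSet v) \ Hs ⊆ G₀.neighborSet v := by
        intro u hu
        obtain ⟨hadj, hnH⟩ := hu
        rw [SimpleGraph.mem_neighborSet] at hadj
        rw [hHs, Set.mem_setOf_eq] at hnH
        have hlt : ddeg G₀ u < h := lt_of_le_of_ne (hG₀deg u) hnH
        exact claim_add u v hadj hlt hvL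
      calc ((G.neighborSet v) \ Hs).ncard
          ≤ (G₀.neighborSet v).ncard :=
            Set.ncard_le_ncard hsub (G₀.neighborSet v).toFinite
        _ < ℓ := hvL
    · -- |Hs| bound
      set Hf : Finset V := Finset.univ.filter (fun v => ddeg G₀ v = h) with hHf
      have hHeq : Hs.ncard = Hf.card := by
        have : Hs = ↑Hf := by ext v; simp [hHs, hHf]
        rw [this, Set.ncard_coe_finset]
      have hnat : h * Hf.card ≤ 2 * ℓ * n := by
        rcases eq_or_lt_of_le hh with heq | hlt
        · have hcard : Hf.card ≤ n := by
            rw [hn, ← Finset.card_univ]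
            exact Finset.card_filter_le _ _
          calc h * Hf.card = ℓ * Hf.card := by rw [heq]
            _ ≤ ℓ * n := Nat.mul_le_mul_left ℓ hcard
            _ ≤ 2 * (ℓ * n) := Nat.le_mul_of_pos_left (ℓ * n) (by norm_num)
            _ = 2 * ℓ * n := by rw [Nat.mul_assoc]
        · have hkey := sum_ddeg_high_le_low G₀ ℓ claim_del
          have h1 : h * Hf.card = ∑ v ∈ Hf, ddeg G₀ v := by
            have hcongr : ∑ v ∈ Hf, ddeg G₀ v = ∑ _v ∈ Hf, h :=
              Finset.sum_congr rfl (fun v hv => by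
                rw [hHf, Finset.mem_filter] at hv
                exact hv.2)
            rw [hcongr, Finset.sum_const, smul_eq_mul, Nat.mul_comm]
          have h2 : Hf ⊆ Finset.univ.filter (fun v => ¬ ddeg G₀ v ≤ ℓ) := by
            intro v hv
            rw [hHf, Finset.mem_filter] at hv
            rw [Finset.mem_filter]
            exact ⟨Finset.mem_univ v, by omega⟩
          have h3 : ∑ v ∈ Hf, ddeg G₀ v
              ≤ ∑ v ∈ Finset.univ.filter (fun v => ¬ ddeg G₀ v ≤ ℓ), ddeg G₀ v :=
            Finset.sum_le_sum_of_subset h2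
          have h4 : ∑ v ∈ Finset.univ.filter (fun v => ddeg G₀ v ≤ ℓ), ddeg G₀ v
              ≤ ℓ * n := by
            calc ∑ v ∈ Finset.univ.filter (fun v => ddeg G₀ v ≤ ℓ), ddeg G₀ v
                ≤ ∑ _v ∈ Finset.univ.filter (fun v => ddeg G₀ v ≤ ℓ), ℓ :=
                  Finset.sum_le_sum (fun v hv => (Finset.mem_filter.1 hv).2)
              _ = (Finset.univ.filter (fun v => ddeg G₀ v ≤ ℓ)).card * ℓ := by
                  rw [Finset.sum_const, smul_eq_mul]
              _ ≤ n * ℓ := by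
                  apply Nat.mul_le_mul_right
                  rw [hn, ← Finset.card_univ]
                  exact Finset.card_filter_le _ _
              _ = ℓ * n := Nat.mul_comm n ℓ
          calc h * Hf.card = ∑ v ∈ Hf, ddeg G₀ v := h1
            _ ≤ ∑ v ∈ Finset.univ.filter (fun v => ¬ ddeg G₀ v ≤ ℓ), ddeg G₀ v := h3
            _ ≤ ∑ v ∈ Finset.univ.filter (fun v => ddeg G₀ v ≤ ℓ), ddeg G₀ v := hkey
            _ ≤ ℓ * n := h4
            _ ≤ 2 * (ℓ * n) := Nat.le_mul_of_pos_left (ℓ * n) (by norm_num)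
            _ = 2 * ℓ * n := by rw [Nat.mul_assoc]
      rw [hHeq]
      have hh0 : (0 : ℝ) < h := by positivity
      rw [div_mul_eq_mul_div, le_div_iff₀ hh0]
      calc (Hf.card : ℝ) * h = (h * Hf.card : ℕ) := by push_cast; ring
        _ ≤ ((2 * ℓ * n : ℕ) : ℝ) := by exact_mod_cast hnat
        _ = 2 * (ℓ : ℝ) * n := by push_cast; ring
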